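/- Priess-Crampe & Ribenboim fixed point theorem: Let X be a nonempty ultrametric space which is sequentially spherically complete, and let f : X → X be strictly contracting. Then f has a unique fixed point, i.e. there exists a unique x* ∈ X with f(x*) = x*. -/

import Mathlib

/-- Priess-Crampe & Ribenboim fixed point theorem: a strictly contracting map on a
nonempty, sequentially spherically complete ultrametric space has a unique fixed point. -/
theorem priess_crampe_ribenboim {X : Type*} [MetricSpace X] [Nonempty X]
    (hultra : ∀ x y z : X, dist x y ≤ max (dist x z) (dist z y))
    (hsph : ∀ (x : ℕ → X) (ρ : ℕ → ℝ), (∀ i, 0 ≤ ρ i) →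
      (∀ i, max (dist (x i) (x (i + 1))) (ρ (i + 1)) ≤ ρ i) →
      (⋂ i : ℕ, Metric.closedBall (x i) (ρ i)).Nonempty)
    (f : X → X)
    (hf : ∀ x y : X, x ≠ y → dist (f x) (f y) < dist x y) :
    ∃! x : X, f x = x := by
  classical
  have hf' : ∀ x y : X, dist (f x) (f y) ≤ dist x y := by
    intro x y
    rcases eq_or_ne x y with rfl | h
    · simp
    · exact (hf x y h).le
  set r : X → ℝ := fun x => dist x (f x) with hr
  have hmono : ∀ x y : X, dist y x ≤ r x → r y ≤ r x := by
    intro x y hyx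
    have h1 : dist y (f y) ≤ max (dist y x) (dist x (f y)) := hultra _ _ _
    have h2 : dist x (f y) ≤ max (dist x (f x)) (dist (f x) (f y)) := hultra _ _ _
    have h3 : dist (f x) (f y) ≤ r x := by
      calc dist (f x) (f y) ≤ dist x y := hf' x y
        _ ≤ r x := by rwa [dist_comm]
    calc r y = dist y (f y) := rfl
      _ ≤ max (dist y x) (dist x (f y)) := h1
      _ ≤ max (r x) (max (r x) (r x)) := by
          exact max_le_max hyx (h2.trans (max_le_max le_rfl h3))
      _ = r x := by simp
  have uniq : ∀ a b : X, f a = a → f b = b → a = b := by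
    intro a b ha hb
    by_contra h
    have := hf a b h
    rw [ha, hb] at this
    exact lt_irrefl _ this
  have hex : ∃ x, f x = x := by
    by_contra hno
    push_neg at hno
    -- infimum of r over the ball B(x, r x)
    set s : X → ℝ := fun x => sInf (r '' Metric.closedBall x (r x)) with hs
    have hball : ∀ x : X, (r '' Metric.closedBall x (r x)).Nonempty := by
      intro x
      exact ⟨r x, x, Metric.mem_closedBall.mpr (by rw [dist_self]; exact dist_nonneg), rfl⟩
    have hbdd : ∀ x : X, BddBelow (r '' Metric.closedBall x (r x)) := by
      intro x
      exact ⟨0, by rintro _ ⟨y, -, rfl⟩; exact dist_nonneg⟩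
    have hstep : ∀ (n : ℕ) (x : X), ∃ y, dist y x ≤ r x ∧ r y < s x + (1/2 : ℝ)^n := by
      intro n x
      obtain ⟨a, ⟨y, hy, rfl⟩, hlt⟩ :=
        Real.lt_sInf_add_pos (hball x) (by positivity : (0:ℝ) < (1/2:ℝ)^n)
      exact ⟨y, Metric.mem_closedBall.mp hy, hlt⟩
    choose g hg1 hg2 using hstep
    obtain ⟨x0⟩ := (inferInstance : Nonempty X)
    let x : ℕ → X := fun n => Nat.rec x0 (fun n xn => g n xn) n
    have hx : ∀ n, x (n+1) = g n (x n) := fun n => rfl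
    have hdist : ∀ n, dist (x (n+1)) (x n) ≤ r (x n) := fun n => hg1 n (x n)
    have hrmono : ∀ n, r (x (n+1)) ≤ r (x n) := fun n => hmono _ _ (hdist n)
    obtain ⟨w, hw⟩ := hsph x (fun n => r (x n)) (fun i => dist_nonneg)
      (by
        intro i
        refine max_le ?_ (hrmono i)
        rw [dist_comm]; exact hdist i)
    simp only [Set.mem_iInter, Metric.mem_closedBall] at hw
    -- r w ≤ r (x n) for all n
    have hrw : ∀ n, r w ≤ r (x n) := fun n => hmono _ _ (hw n)
    -- f w in each ball, so s (x n) ≤ r (f w)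
    have hfw : ∀ n, dist (f w) (x n) ≤ r (x n) := by
      intro n
      calc dist (f w) (x n) ≤ max (dist (f w) w) (dist w (x n)) := hultra _ _ _
        _ ≤ r (x n) := by
            refine max_le ?_ (hw n)
            rw [dist_comm]
            exact hrw n
    have hsle : ∀ n, s (x n) ≤ r (f w) := by
      intro n
      exact csInf_le (hbdd (x n)) ⟨f w, Metric.mem_closedBall.mpr (hfw n), rfl⟩
    -- r w ≤ r (f w) + (1/2)^n
    have key : ∀ n, r w ≤ r (f w) + (1/2 : ℝ)^n := by
      intro n
      calc r w ≤ r (x (n+1)) := hrw (n+1)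
        _ = r (g n (x n)) := by rw [hx n]
        _ ≤ s (x n) + (1/2:ℝ)^n := (hg2 n (x n)).le
        _ ≤ r (f w) + (1/2:ℝ)^n := by linarith [hsle n]
    have hle : r w ≤ r (f w) := by
      refine le_of_forall_pos_le_add ?_
      intro ε hε
      obtain ⟨n, hn⟩ := exists_pow_lt_of_lt_one hε (by norm_num : (1/2:ℝ) < 1)
      exact (key n).trans (by linarith)
    have hlt : r (f w) < r w := hf w (f w) (fun h => hno w h.symm)
    exact absurd hle (not_le.mpr hlt)
  obtain ⟨a, ha⟩ := hex
  exact ⟨a, ha, fun y hy => uniq y a hy ha⟩
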